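/- Let X be the number of fixed points of a uniformly random permutation of {1,...,k}. Then for every real t, E[e^{tX}] ≤ exp(e^t). -/

import Mathlib

open Finset

lemma count_fix_le (k : ℕ) (S : Finset (Fin k)) :
    (Finset.univ.filter fun σ : Equiv.Perm (Fin k) => ∀ i ∈ S, σ i = i).card
      ≤ (k - S.card).factorial := by
  have hcard : Fintype.card {i : Fin k // i ∉ S} = k - S.card := by
    simp [Fintype.card_subtype]
    rw [Finset.filter_not, Finset.card_sdiff_of_subset (Finset.filter_subset _ _)]
    simp [Finset.filter_mem_eq_inter]
  have h1 : (Finset.univ.filter fun σ : Equiv.Perm (Fin k) => ∀ i ∈ S, σ i = i).card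
      = Fintype.card {σ : Equiv.Perm (Fin k) // ∀ i ∈ S, σ i = i} := by
    rw [Fintype.card_subtype]
  rw [h1, ← hcard, ← Fintype.card_perm]
  have key : ∀ (σ : Equiv.Perm (Fin k)), (∀ i ∈ S, σ i = i) →
      ∀ i : Fin k, i ∉ S ↔ σ i ∉ S := by
    intro σ hσ i
    constructor
    · intro h hc
      have h2 : σ (σ i) = σ i := hσ _ hc
      have h3 : σ i = i := σ.injective h2
      exact h (h3 ▸ hc)
    · intro h hi
      apply h
      rw [hσ i hi]
      exact hi
  apply Fintype.card_le_of_injective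
    (fun σ => σ.1.subtypePerm (fun i => (key σ.1 σ.2 i).symm))
  intro σ τ h
  apply Subtype.ext
  apply Equiv.ext
  intro i
  by_cases hi : i ∈ S
  · rw [σ.2 i hi, τ.2 i hi]
  · have := congrArg (fun (e : Equiv.Perm {i : Fin k // i ∉ S}) => (e ⟨i, hi⟩ : Fin k)) h
    simpa [Equiv.Perm.subtypePerm] using this

/-- If X is the number of fixed points of a uniformly random permutation of
{1,...,k}, then for every real t, E[e^{tX}] ≤ exp(e^t) (uniformly in k). -/
theorem stmt_7 (k : ℕ) (t : ℝ) :
    (∑ σ : Equiv.Perm (Fin k),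
        Real.exp (t * ((Finset.univ.filter fun i : Fin k => σ i = i).card : ℝ)))
      / (Nat.factorial k) ≤ Real.exp (Real.exp t) := by
  have hfact : (0:ℝ) < (k.factorial : ℝ) := by exact_mod_cast k.factorial_pos
  rw [div_le_iff₀ hfact]
  rcases le_or_gt t 0 with ht | ht
  · calc (∑ σ : Equiv.Perm (Fin k),
        Real.exp (t * ((Finset.univ.filter fun i : Fin k => σ i = i).card : ℝ)))
        ≤ ∑ _σ : Equiv.Perm (Fin k), (1:ℝ) := by
          apply Finset.sum_le_sum
          intro σ _
          rw [← Real.exp_zero]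
          apply Real.exp_le_exp.mpr
          exact mul_nonpos_of_nonpos_of_nonneg ht (Nat.cast_nonneg _)
      _ = (k.factorial : ℝ) := by
          rw [Finset.sum_const, Finset.card_univ, Fintype.card_perm, Fintype.card_fin]
          simp
      _ ≤ Real.exp (Real.exp t) * k.factorial := by
          nlinarith [Real.add_one_le_exp (Real.exp t), Real.exp_pos t, hfact]
  · set u : ℝ := Real.exp t - 1 with hu_def
    have hu : 0 ≤ u := by
      have := Real.one_le_exp ht.le
      simp [hu_def]; linarith
    have hexp : Real.exp t = 1 + u := by ring
    calc (∑ σ : Equiv.Perm (Fin k),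
        Real.exp (t * ((Finset.univ.filter fun i : Fin k => σ i = i).card : ℝ)))
        = ∑ σ : Equiv.Perm (Fin k),
            ∑ S ∈ (Finset.univ.filter fun i : Fin k => σ i = i).powerset, u ^ S.card := by
          refine Finset.sum_congr rfl fun σ _ => ?_
          rw [mul_comm, Real.exp_nat_mul, hexp]
          have h := Finset.prod_add (fun _ : Fin k => u) (fun _ : Fin k => (1:ℝ))
            (Finset.univ.filter fun i : Fin k => σ i = i)
          simp only [Finset.prod_const, Finset.prod_const_one, mul_one, one_pow] at h
          rw [add_comm] at h
          rw [h]
      _ = ∑ σ : Equiv.Perm (Fin k), ∑ S : Finset (Fin k),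
            if S ⊆ (Finset.univ.filter fun i : Fin k => σ i = i) then u ^ S.card else 0 := by
          refine Finset.sum_congr rfl fun σ _ => ?_
          rw [← Finset.sum_filter]
          congr 1
          ext S
          simp [Finset.mem_powerset]
      _ = ∑ S : Finset (Fin k), ∑ σ : Equiv.Perm (Fin k),
            if S ⊆ (Finset.univ.filter fun i : Fin k => σ i = i) then u ^ S.card else 0 :=
          Finset.sum_comm
      _ = ∑ S : Finset (Fin k),
            ((Finset.univ.filter fun σ : Equiv.Perm (Fin k) => ∀ i ∈ S, σ i = i).card : ℝ)
              * u ^ S.card := by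
          refine Finset.sum_congr rfl fun S _ => ?_
          have hset : (Finset.univ.filter fun σ : Equiv.Perm (Fin k) =>
              S ⊆ (Finset.univ.filter fun i : Fin k => σ i = i))
              = Finset.univ.filter fun σ : Equiv.Perm (Fin k) => ∀ i ∈ S, σ i = i := by
            ext σ
            simp [Finset.subset_iff]
          rw [Finset.sum_ite, Finset.sum_const, Finset.sum_const_zero, add_zero,
            nsmul_eq_mul, hset]
      _ ≤ ∑ S : Finset (Fin k), ((k - S.card).factorial : ℝ) * u ^ S.card := by
          apply Finset.sum_le_sum
          intro S _
          apply mul_le_mul_of_nonneg_right _ (pow_nonneg hu _)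
          exact_mod_cast count_fix_le k S
      _ = ∑ m ∈ Finset.range (k + 1),
            k.choose m • (((k - m).factorial : ℝ) * u ^ m) := by
          rw [← Finset.powerset_univ, Finset.sum_powerset_apply_card
            (fun m => ((k - m).factorial : ℝ) * u ^ m)]
          simp [Finset.card_univ]
      _ = ∑ m ∈ Finset.range (k + 1), (k.factorial : ℝ) * (u ^ m / m.factorial) := by
          refine Finset.sum_congr rfl fun m hm => ?_
          have hmk : m ≤ k := Nat.lt_succ_iff.mp (Finset.mem_range.mp hm)
          have hkey : (k.choose m * m.factorial * (k - m).factorial : ℕ) = k.factorial :=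
            Nat.choose_mul_factorial_mul_factorial hmk
          have hkey' : ((k.choose m : ℝ) * m.factorial * (k - m).factorial) = k.factorial := by
            exact_mod_cast hkey
          have hm0 : (0:ℝ) < (m.factorial : ℝ) := by exact_mod_cast m.factorial_pos
          have hk' : (k.factorial : ℝ) = (k.choose m : ℝ) * m.factorial * (k - m).factorial :=
            hkey'.symm
          rw [nsmul_eq_mul, hk']
          field_simp
      _ = (k.factorial : ℝ) * ∑ m ∈ Finset.range (k + 1), u ^ m / m.factorial :=
          (Finset.mul_sum _ _ _).symm
      _ ≤ (k.factorial : ℝ) * Real.exp u :=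
          mul_le_mul_of_nonneg_left (Real.sum_le_exp_of_nonneg hu _) hfact.le
      _ ≤ Real.exp (Real.exp t) * k.factorial := by
          rw [mul_comm]
          apply mul_le_mul_of_nonneg_right _ hfact.le
          apply Real.exp_le_exp.mpr
          rw [hu_def]
          linarith [Real.exp_pos t]
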